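/- Let η > 1 and let (l_i) be the sequence defined by l_{i+1} = ⌊l_i η⌋ with l_1 a sufficiently large integer. Let y ∈ [0,1) be the number whose b-ary expansion is the concatenation of the blocks ν_i = 0^{⌊l_i η⌋ - l_i - 1}1. Then Δ^b(y) = η. -/

import Mathlib

open Filter MeasureTheory
attribute [local instance] Classical.propDecidable

/-- Distance from t to the nearest integer. -/
noncomputable def nint (t : ℝ) : ℝ := |t - round t|

/-- The b-adic approximation exponent Δ^b(x). -/
noncomputable def Delta (b : ℕ) (x : ℝ) : ℝ :=
  sSup {α : ℝ | 1 ≤ α ∧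
    ∃ᶠ n : ℕ in atTop, nint ((b : ℝ) ^ n * x) ≤ (b : ℝ) ^ (-(n : ℝ) * (α - 1))}

/-- `IsExpansion b x ε` : `ε` (indexed from 1) is a b-ary digit expansion of `x`
which does not end in an infinite tail of (b-1)'s. -/
structure IsExpansion (b : ℕ) (x : ℝ) (ε : ℕ → ℕ) : Prop where
  digit_lt : ∀ i, ε i < b
  sum_eq : x = ∑' i : ℕ, (ε (i + 1) : ℝ) / (b : ℝ) ^ (i + 1)
  no_tail : ¬ ∀ᶠ i in atTop, ε i = b - 1

theorem nint_int_add (N : ℤ) (x : ℝ) : nint ((N : ℝ) + x) = nint x := by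
  unfold nint
  rw [add_comm, round_add_intCast]
  push_cast
  ring_nf

theorem nint_lower (x : ℝ) (h0 : 0 ≤ x) : min x (1 - x) ≤ nint x := by
  unfold nint
  rcases le_or_gt (round x) 0 with h | h
  · have h' : (round x : ℝ) ≤ 0 := by exact_mod_cast h
    calc min x (1 - x) ≤ x := min_le_left _ _
      _ ≤ x - round x := by linarith
      _ ≤ |x - round x| := le_abs_self _
  · have h' : (1 : ℝ) ≤ (round x : ℝ) := by exact_mod_cast h
    calc min x (1 - x) ≤ 1 - x := min_le_right _ _
      _ ≤ (round x : ℝ) - x := by linarith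
      _ ≤ |x - round x| := by rw [abs_sub_comm]; exact le_abs_self _

theorem nint_of_lt_half (x : ℝ) (h0 : 0 ≤ x) (h : x < 1 / 2) : nint x = x := by
  unfold nint
  rw [round_eq_zero_iff.2 ⟨by simp; linarith, h⟩]
  simp [abs_of_nonneg h0]

theorem nint_le_half (x : ℝ) : nint x ≤ 1 / 2 := abs_sub_round x

set_option maxHeartbeats 4000000 in
theorem Delta_of_block_expansion (b : ℕ) (hb : 2 ≤ b) (η : ℝ) (hη : 1 < η)
    (l : ℕ → ℕ) (hl1 : 2 / (η - 1) ≤ (l 1 : ℝ))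
    (hrec : ∀ i : ℕ, 1 ≤ i → (l (i + 1) : ℤ) = ⌊(l i : ℝ) * η⌋)
    (y : ℝ) (θ : ℕ → ℕ) (hθ : IsExpansion b y θ)
    (hdigits : ∀ n : ℕ, 1 ≤ n →
      θ n = if ∃ i : ℕ, 2 ≤ i ∧ n + l 1 = l i then 1 else 0) :
    Delta b y = η := by
  ----------------------------------------------------------------
  -- basic real facts
  ----------------------------------------------------------------
  have hb0 : (0:ℝ) < b := by positivity
  have hb1 : (1:ℝ) < b := by exact_mod_cast by omega
  have hb2R : (2:ℝ) ≤ b := by exact_mod_cast hb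
  have hbm1 : (0:ℝ) ≤ (b:ℝ) - 1 := by linarith
  have hrb0 : (0:ℝ) ≤ 1/(b:ℝ) := by positivity
  have hrb1 : (1:ℝ)/(b:ℝ) < 1 := by rw [div_lt_one hb0]; exact hb1
  have hη1 : (0:ℝ) < η - 1 := by linarith
  have hl1R : (2:ℝ) ≤ (l 1 : ℝ) * (η - 1) := by
    rw [div_le_iff₀ hη1] at hl1; linarith
  ----------------------------------------------------------------
  -- growth facts about l
  ----------------------------------------------------------------
  have key : ∀ i, 1 ≤ i → (l 1 : ℝ) ≤ (l i : ℝ) →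
      (l i + 2 ≤ l (i+1) ∧ (l (i+1):ℝ) ≤ η * (l i : ℝ)) := by
    intro i hi hli
    have h2 : (2:ℝ) ≤ (l i : ℝ) * (η - 1) := by
      calc (2:ℝ) ≤ (l 1 : ℝ) * (η - 1) := hl1R
        _ ≤ (l i : ℝ) * (η - 1) := by
          apply mul_le_mul_of_nonneg_right hli (le_of_lt hη1)
    have hfl := hrec i hi
    have hup : (l (i+1):ℝ) ≤ (l i : ℝ) * η := by
      have h := Int.floor_le ((l i : ℝ) * η)
      rw [← hfl] at h
      exact_mod_cast h
    have hlow : (l i : ℝ) * η - 1 < (l (i+1) : ℝ) := by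
      have h := Int.sub_one_lt_floor ((l i : ℝ) * η)
      rw [← hfl] at h
      exact_mod_cast h
    constructor
    · have : ((l i : ℝ)) + 1 < (l (i+1) : ℝ) := by nlinarith
      have : (l i : ℕ) + 1 < l (i+1) := by exact_mod_cast this
      omega
    · linarith [hup]
  have hmono1 : ∀ i, 1 ≤ i → l 1 ≤ l i := by
    intro i hi
    induction i, hi using Nat.le_induction with
    | base => exact le_refl _
    | succ n hn ih =>
      have h := key n hn (by exact_mod_cast ih)
      omega
  have hstep : ∀ i, 1 ≤ i → l i + 2 ≤ l (i+1) :=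
    fun i hi => (key i hi (by exact_mod_cast hmono1 i hi)).1
  have hub : ∀ i, 1 ≤ i → (l (i+1):ℝ) ≤ η * (l i : ℝ) :=
    fun i hi => (key i hi (by exact_mod_cast hmono1 i hi)).2
  have hlowR : ∀ i, 1 ≤ i → (l i : ℝ) * η - 1 < (l (i+1) : ℝ) := by
    intro i hi
    have h := Int.sub_one_lt_floor ((l i : ℝ) * η)
    rw [← hrec i hi] at h
    exact_mod_cast h
  have hmono : ∀ i j, 1 ≤ i → i ≤ j → l i ≤ l j := by
    intro i j hi hij
    induction j, hij using Nat.le_induction with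
    | base => exact le_refl _
    | succ n hn ih => have := hstep n (le_trans hi hn); omega
  have hgap2 : ∀ i j, 1 ≤ i → i < j → l i + 2 ≤ l j := by
    intro i j hi hij
    have h1 := hstep i hi
    have h2 := hmono (i+1) j (by omega) hij
    omega
  have hgrow : ∀ k : ℕ, l 1 + 2 * k ≤ l (1 + k) := by
    intro k
    induction k with
    | zero => simp
    | succ n ih =>
      have h := hstep (1 + n) (by omega)
      have : l (1 + n) + 2 ≤ l (1 + (n+1)) := by
        rw [show 1 + (n+1) = (1+n) + 1 by ring]; exact h
      omega
  ----------------------------------------------------------------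
  -- digit facts
  ----------------------------------------------------------------
  set m : ℕ → ℕ := fun i => l i - l 1 with hm
  have hm_add : ∀ i, 1 ≤ i → m i + l 1 = l i := by
    intro i hi
    simp only [hm]
    have := hmono 1 i le_rfl hi
    omega
  have hm2 : ∀ i, 2 ≤ i → 2 ≤ m i := by
    intro i hi
    have := hgap2 1 i le_rfl (by omega)
    simp only [hm]; omega
  have hθ1 : ∀ i, 2 ≤ i → θ (m i) = 1 := by
    intro i hi
    rw [hdigits (m i) (by have := hm2 i hi; omega), if_pos ⟨i, hi, hm_add i (by omega)⟩]
  have hθle1 : ∀ n, 1 ≤ n → θ n ≤ 1 := by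
    intro n hn
    rw [hdigits n hn]
    split <;> omega
  have hconsec : ∀ n : ℕ, θ (n+1) = 0 ∨ θ (n+2) = 0 := by
    intro n
    by_contra h
    push_neg at h
    obtain ⟨h1, h2⟩ := h
    rw [hdigits (n+1) (by omega)] at h1
    rw [hdigits (n+2) (by omega)] at h2
    by_cases c1 : ∃ i : ℕ, 2 ≤ i ∧ (n+1) + l 1 = l i
    · by_cases c2 : ∃ i : ℕ, 2 ≤ i ∧ (n+2) + l 1 = l i
      · obtain ⟨i, hi, hie⟩ := c1
        obtain ⟨j, hj, hje⟩ := c2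
        rcases lt_trichotomy i j with h | h | h
        · have := hgap2 i j (by omega) h; omega
        · subst h; omega
        · have := hmono j i (by omega) (le_of_lt h); omega
      · rw [if_neg c2] at h2; omega
    · rw [if_neg c1] at h1; omega
  have hbetween : ∀ i j : ℕ, 2 ≤ i → m i < j → j < m (i+1) → θ j = 0 := by
    intro i j hi hj1 hj2
    rw [hdigits j (by have := hm2 i hi; omega)]
    rw [if_neg]
    rintro ⟨i', hi', hie⟩
    have hli : l i < j + l 1 := by have := hm_add i (by omega); omega
    have hli1 : j + l 1 < l (i+1) := by have := hm_add (i+1) (by omega); omega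
    rcases le_or_gt i' i with h | h
    · have := hmono i' i (by omega) h; omega
    · have := hmono (i+1) i' (by omega) h; omega
  ----------------------------------------------------------------
  -- the tail sums T n
  ----------------------------------------------------------------
  set T : ℕ → ℝ := fun n => ∑' j : ℕ, (θ (n + j + 1) : ℝ) / (b:ℝ)^(j+1) with hT
  have hbound : ∀ n j : ℕ, (θ (n + j + 1) : ℝ) / (b:ℝ)^(j+1) ≤ (1/(b:ℝ))^j := by
    intro n j
    have h1 : (θ (n+j+1):ℝ) ≤ 1 := by exact_mod_cast hθle1 (n+j+1) (by omega)
    calc (θ (n+j+1):ℝ) / (b:ℝ)^(j+1) ≤ 1 / (b:ℝ)^(j+1) := by gcongr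
      _ = (1/(b:ℝ))^(j+1) := by rw [div_pow, one_pow]
      _ ≤ (1/(b:ℝ))^j := by
          apply pow_le_pow_of_le_one hrb0 (le_of_lt hrb1) (by omega)
  have hsummable : ∀ n, Summable (fun j : ℕ => (θ (n + j + 1) : ℝ) / (b:ℝ)^(j+1)) := by
    intro n
    exact Summable.of_nonneg_of_le (fun j => by positivity) (hbound n)
      (summable_geometric_of_lt_one hrb0 hrb1)
  have hTnonneg : ∀ n, 0 ≤ T n := fun n => tsum_nonneg (fun j => by positivity)
  have hT_ge : ∀ n k : ℕ, 1 ≤ k → θ (n + k) = 1 → (1/(b:ℝ))^k ≤ T n := by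
    intro n k hk h1
    obtain ⟨k', rfl⟩ : ∃ k', k = k' + 1 := ⟨k - 1, by omega⟩
    have h2 : (θ (n + k' + 1):ℝ)/(b:ℝ)^(k'+1) ≤ T n :=
      Summable.le_tsum (hsummable n) k' (fun j _ => by positivity)
    rw [show n + k' + 1 = n + (k' + 1) by ring, h1] at h2
    rw [div_pow, one_pow]
    simpa using h2
  have hgeo_summable : Summable (fun j : ℕ => ((b:ℝ)-1)/(b:ℝ)^(j+1)) := by
    apply Summable.of_nonneg_of_le
      (fun j => div_nonneg hbm1 (by positivity)) (fun j => ?_)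
      ((summable_geometric_of_lt_one hrb0 hrb1).mul_left ((b:ℝ)-1))
    rw [div_pow, one_pow, mul_one_div, pow_succ]
    gcongr
    nlinarith [pow_pos hb0 j]
  have hgeo : ∑' j : ℕ, ((b:ℝ)-1)/(b:ℝ)^(j+1) = 1 := by
    have h1 : ∀ j : ℕ, ((b:ℝ)-1)/(b:ℝ)^(j+1) = (((b:ℝ)-1)/b) * (1/(b:ℝ))^j := by
      intro j
      rw [div_pow, one_pow, pow_succ]
      rw [div_mul_div_comm, mul_one]
      rw [mul_comm ((b:ℝ)^j) b]
    rw [tsum_congr h1, tsum_mul_left, tsum_geometric_of_lt_one hrb0 hrb1]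
    have h2 : (1:ℝ) - 1/b ≠ 0 := by
      have : (0:ℝ) < 1 - 1/b := by linarith
      linarith [this]
    field_simp
    rw [div_self (ne_of_gt (by linarith : (0:ℝ) < (b:ℝ)-1))]
  have hT_le : ∀ n : ℕ, (∃ j₀, j₀ ≤ 1 ∧ θ (n + j₀ + 1) = 0) →
      T n ≤ 1 - ((b:ℝ)-1)/(b:ℝ)^2 := by
    intro n ⟨j₀, hj₀, hz⟩
    have hsumite : Summable (fun j : ℕ => if j = j₀ then 0 else ((b:ℝ)-1)/(b:ℝ)^(j+1)) := by
      apply Summable.of_nonneg_of_le (fun j => ?_) (fun j => ?_) hgeo_summable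
      · split
        · exact le_rfl
        · exact div_nonneg hbm1 (by positivity)
      · split
        · exact div_nonneg hbm1 (by positivity)
        · exact le_rfl
    have hle : T n ≤ ∑' j : ℕ, (if j = j₀ then 0 else ((b:ℝ)-1)/(b:ℝ)^(j+1)) := by
      apply Summable.tsum_le_tsum (fun j => ?_) (hsummable n) hsumite
      by_cases h : j = j₀
      · subst h; rw [if_pos rfl, hz]; simp
      · rw [if_neg h]
        have h1 : (θ (n+j+1):ℝ) ≤ 1 := by exact_mod_cast hθle1 (n+j+1) (by omega)
        have h2 : (1:ℝ) ≤ (b:ℝ) - 1 := by linarith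
        gcongr
        linarith
    have heq := Summable.tsum_eq_add_tsum_ite hgeo_summable j₀
    rw [hgeo] at heq
    have hfin : ((b:ℝ)-1)/(b:ℝ)^2 ≤ ((b:ℝ)-1)/(b:ℝ)^(j₀+1) := by
      rw [div_le_div_iff₀ (by positivity) (by positivity)]
      interval_cases j₀ <;> norm_num <;>
        nlinarith [mul_nonneg (mul_nonneg hbm1 hbm1) (le_of_lt hb0)]
    linarith
  ----------------------------------------------------------------
  -- b^n y = integer + T n
  ----------------------------------------------------------------
  have hys : Summable (fun i : ℕ => (θ (i+1):ℝ)/(b:ℝ)^(i+1)) := by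
    have := hsummable 0
    apply this.congr
    intro j
    rw [show 0 + j + 1 = j + 1 by omega]
  have hsplit : ∀ n : ℕ, ∃ N : ℤ, (b:ℝ)^n * y = (N:ℝ) + T n := by
    intro n
    refine ⟨∑ i ∈ Finset.range n, (θ (i+1) : ℤ) * (b:ℤ)^(n-i-1), ?_⟩
    have hsm : Summable (fun i : ℕ => (b:ℝ)^n * ((θ (i+1):ℝ)/(b:ℝ)^(i+1))) :=
      hys.mul_left _
    have hkey := Summable.sum_add_tsum_nat_add
      (f := fun i => (b:ℝ)^n * ((θ (i+1):ℝ)/(b:ℝ)^(i+1))) n hsm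
    have hyn : (b:ℝ)^n * y = ∑' i : ℕ, (b:ℝ)^n * ((θ (i+1):ℝ)/(b:ℝ)^(i+1)) := by
      rw [hθ.sum_eq, ← tsum_mul_left]
    have htail : ∑' i : ℕ, (b:ℝ)^n * ((θ (i+n+1):ℝ)/(b:ℝ)^(i+n+1)) = T n := by
      apply tsum_congr
      intro j
      have hp : (b:ℝ)^(j+n+1) = (b:ℝ)^n * (b:ℝ)^(j+1) := by
        rw [← pow_add]; congr 1; ring
      rw [show n + j + 1 = j + n + 1 by ring, hp]
      field_simp
    have hhead : ((∑ i ∈ Finset.range n, (θ (i+1) : ℤ) * (b:ℤ)^(n-i-1) : ℤ) : ℝ)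
        = ∑ i ∈ Finset.range n, (b:ℝ)^n * ((θ (i+1):ℝ)/(b:ℝ)^(i+1)) := by
      push_cast
      apply Finset.sum_congr rfl
      intro i hi
      have hi' : i < n := Finset.mem_range.1 hi
      have hp : (b:ℝ)^(n-i-1) * (b:ℝ)^(i+1) = (b:ℝ)^n := by
        rw [← pow_add]; congr 1; omega
      field_simp
      linear_combination (θ (i+1):ℝ) * hp
    rw [hyn, ← hkey, hhead, htail]
  have hnintT : ∀ n : ℕ, nint ((b:ℝ)^n * y) = nint (T n) := by
    intro n
    obtain ⟨N, hN⟩ := hsplit n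
    rw [hN, nint_int_add]
  ----------------------------------------------------------------
  -- lower bound on nint from next one digit
  ----------------------------------------------------------------
  have hnint_lb : ∀ n k : ℕ, 1 ≤ k → θ (n + k) = 1 →
      (1/2) * (1/(b:ℝ))^k ≤ nint ((b:ℝ)^n * y) := by
    intro n k hk h1
    rw [hnintT n]
    have hmin := nint_lower (T n) (hTnonneg n)
    have hTk := hT_ge n k hk h1
    have hcons : ∃ j₀, j₀ ≤ 1 ∧ θ (n + j₀ + 1) = 0 := by
      rcases hconsec n with h | h
      · exact ⟨0, by omega, h⟩
      · exact ⟨1, by omega, h⟩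
    have hTu := hT_le n hcons
    have h2 : (1/2) * (1/(b:ℝ))^k ≤ min (T n) (1 - T n) := by
      apply le_min
      · calc (1/2) * (1/(b:ℝ))^k ≤ 1 * (1/(b:ℝ))^k := by gcongr; norm_num
          _ = (1/(b:ℝ))^k := one_mul _
          _ ≤ T n := hTk
      · have hbk : (1/(b:ℝ))^k ≤ 1/(b:ℝ) := by
          calc (1/(b:ℝ))^k ≤ (1/(b:ℝ))^1 :=
            pow_le_pow_of_le_one hrb0 (le_of_lt hrb1) hk
            _ = 1/(b:ℝ) := pow_one _
        have hq : (1/2) * (1/(b:ℝ)) ≤ ((b:ℝ)-1)/(b:ℝ)^2 := by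
          rw [show (1/2) * (1/(b:ℝ)) = 1/(2*(b:ℝ)) by ring,
            div_le_div_iff₀ (by positivity) (by positivity)]
          nlinarith [mul_nonneg (le_of_lt hb0) (by linarith : (0:ℝ) ≤ (b:ℝ) - 2)]
        calc (1/2) * (1/(b:ℝ))^k ≤ (1/2) * (1/(b:ℝ)) :=
            mul_le_mul_of_nonneg_left hbk (by norm_num)
          _ ≤ ((b:ℝ)-1)/(b:ℝ)^2 := hq
          _ ≤ 1 - T n := by linarith
    exact le_trans h2 hmin
  ----------------------------------------------------------------
  -- rpow / pow conversion
  ----------------------------------------------------------------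
  have hpow_rpow : ∀ t : ℕ, (1/(b:ℝ))^t = (b:ℝ)^(-(t:ℝ)) := by
    intro t
    rw [Real.rpow_neg (le_of_lt hb0), Real.rpow_natCast, div_pow, one_pow, one_div]
  ----------------------------------------------------------------
  -- next one digit exists and is not too far
  ----------------------------------------------------------------
  have hnext : ∀ n : ℕ, ∃ k : ℕ, 1 ≤ k ∧ θ (n + k) = 1 ∧
      (k:ℝ) ≤ (η-1) * ((n:ℝ) + (l 1 : ℝ)) := by
    intro n
    have hex : ∃ i : ℕ, 2 ≤ i ∧ n < m i := by
      refine ⟨n + 2, by omega, ?_⟩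
      have h := hgrow (n+1)
      rw [show 1+(n+1) = n+2 by ring] at h
      simp only [hm]
      omega
    obtain ⟨i₀, ⟨hi₀2, hi₀n⟩, hminp⟩ :
        ∃ i₀, (2 ≤ i₀ ∧ n < m i₀) ∧ ∀ j, j < i₀ → ¬(2 ≤ j ∧ n < m j) :=
      ⟨Nat.find hex, Nat.find_spec hex, fun j hj => Nat.find_min hex hj⟩
    set k := m i₀ - n with hkdef
    have hk1 : 1 ≤ k := by omega
    have hnk : n + k = m i₀ := by omega
    have hcastN : n + k + l 1 = l i₀ := by
      have := hm_add i₀ (by omega)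
      omega
    have hcast : (n:ℝ) + (k:ℝ) + (l 1:ℝ) = (l i₀ : ℝ) := by exact_mod_cast hcastN
    refine ⟨k, hk1, by rw [hnk]; exact hθ1 i₀ hi₀2, ?_⟩
    rcases eq_or_lt_of_le hi₀2 with h2 | h3
    · -- i₀ = 2
      have hA : (l 2:ℝ) ≤ η * (l 1:ℝ) := by
        have := hub 1 le_rfl
        norm_num at this
        exact this
      subst h2
      have hn0 : (0:ℝ) ≤ (n:ℝ) := Nat.cast_nonneg n
      nlinarith
    · -- 3 ≤ i₀
      have hmin := hminp (i₀ - 1) (by omega)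
      have h3' : m (i₀ - 1) ≤ n := by
        by_contra hc
        exact hmin ⟨by omega, by omega⟩
      have hBn : l (i₀ - 1) ≤ n + l 1 := by
        have := hm_add (i₀ - 1) (by omega)
        omega
      have hB : (l (i₀-1):ℝ) ≤ (n:ℝ) + (l 1:ℝ) := by exact_mod_cast hBn
      have hA : (l i₀:ℝ) ≤ η * (l (i₀-1):ℝ) := by
        have h := hub (i₀-1) (by omega)
        rw [show i₀ - 1 + 1 = i₀ by omega] at h
        exact h
      have hη0 : (0:ℝ) ≤ η := by linarith
      have h4 : η * (l (i₀-1):ℝ) ≤ η * ((n:ℝ) + (l 1:ℝ)) :=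
        mul_le_mul_of_nonneg_left hB hη0
      linarith
  ----------------------------------------------------------------
  -- upper bound : every α in the set is ≤ η
  ----------------------------------------------------------------
  set S : Set ℝ := {α : ℝ | 1 ≤ α ∧
    ∃ᶠ n : ℕ in atTop, nint ((b : ℝ) ^ n * y) ≤ (b : ℝ) ^ (-(n : ℝ) * (α - 1))} with hS
  have hub_S : ∀ α ∈ S, α ≤ η := by
    rintro α ⟨hα1, hfreq⟩
    by_contra hc
    push_neg at hc
    have hαη : 0 < α - η := by linarith
    set N : ℕ := ⌈(1 + (η-1) * (l 1:ℝ))/(α - η)⌉₊ + 1 with hN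
    have hNlarge : (1 + (η-1) * (l 1:ℝ))/(α - η) < (N:ℝ) := by
      have := Nat.le_ceil ((1 + (η-1) * (l 1:ℝ))/(α - η))
      push_cast [hN]
      linarith
    obtain ⟨n, hnN, hn⟩ := frequently_atTop.1 hfreq N
    obtain ⟨k, hk1, hkθ, hkb⟩ := hnext n
    have hlb := hnint_lb n k hk1 hkθ
    have hr1 : (b:ℝ)^(-(1 + (k:ℝ))) ≤ (1/2) * (1/(b:ℝ))^k := by
      have he : -(1 + (k:ℝ)) = -(((k+1:ℕ)):ℝ) := by push_cast; ring
      rw [he, ← hpow_rpow (k+1), pow_succ]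
      rw [mul_comm ((1/(b:ℝ))^k) (1/(b:ℝ))]
      apply mul_le_mul_of_nonneg_right _ (by positivity)
      rw [div_le_div_iff₀ hb0 (by norm_num)]
      linarith
    have hchain : (b:ℝ)^(-(1 + (k:ℝ))) ≤ (b:ℝ)^(-(n:ℝ) * (α - 1)) :=
      le_trans hr1 (le_trans hlb hn)
    have hexp : -(1 + (k:ℝ)) ≤ -(n:ℝ) * (α - 1) :=
      (Real.rpow_le_rpow_left_iff hb1).1 hchain
    have hineq : (n:ℝ) * (α - 1) ≤ 1 + (k:ℝ) := by linarith
    have hkb' : (n:ℝ) * (α - 1) ≤ 1 + (η-1) * ((n:ℝ) + (l 1:ℝ)) := by linarith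
    have hnN' : (N:ℝ) ≤ (n:ℝ) := by exact_mod_cast hnN
    have hfinal : (n:ℝ) * (α - η) ≤ 1 + (η-1) * (l 1:ℝ) := by nlinarith
    have hNa : (1 + (η-1) * (l 1:ℝ)) < (N:ℝ) * (α - η) := by
      rw [div_lt_iff₀ hαη] at hNlarge
      linarith
    nlinarith
  ----------------------------------------------------------------
  -- membership : every α with 1 ≤ α < η is in the set
  ----------------------------------------------------------------
  have hmem : ∀ α : ℝ, 1 ≤ α → α < η → α ∈ S := by
    intro α hα1 hαη
    refine ⟨hα1, frequently_atTop.2 fun N => ?_⟩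
    have hηα : 0 < η - α := by linarith
    set c : ℕ := ⌈(4:ℝ)/(η - α)⌉₊ with hc
    set i : ℕ := 2 + N + c with hidef
    have hi2 : 2 ≤ i := by omega
    have hgrow' : l 1 + 2 * (i - 1) ≤ l i := by
      have := hgrow (i-1)
      rw [show 1 + (i-1) = i by omega] at this
      exact this
    have hmiN : N ≤ m i := by simp only [hm]; omega
    have hli4 : (4:ℝ) ≤ (η - α) * (l i : ℝ) := by
      have hcle : ((c:ℕ):ℝ) ≤ (l i:ℝ) := by
        have : c ≤ l i := by omega
        exact_mod_cast this
      have hcge : (4:ℝ)/(η - α) ≤ (c:ℝ) + 1 := by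
        have := Nat.le_ceil ((4:ℝ)/(η - α))
        push_cast [hc]
        linarith
      have hc1 : (c:ℝ) + 1 ≤ (l i:ℝ) := by
        have : c + 1 ≤ l i := by omega
        exact_mod_cast this
      rw [div_le_iff₀ hηα] at hcge
      nlinarith
    -- the gap g
    set g : ℕ := l (i+1) - l i with hgdef
    have hgstep := hstep i (by omega)
    have hg2 : 2 ≤ g := by omega
    have hlle : l i ≤ l (i+1) := by omega
    have hgR : (g:ℝ) = (l (i+1):ℝ) - (l i:ℝ) := by
      simp only [hgdef]
      have : (l (i+1) - l i : ℕ) = l (i+1) - l i := rfl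
      push_cast [Nat.cast_sub hlle]
      ring
    have hglb : (η - 1) * (l i:ℝ) - 1 ≤ (g:ℝ) := by
      have := hlowR i (by omega)
      rw [hgR]
      nlinarith
    have hg3 : (3:ℝ) ≤ (g:ℝ) := by
      have h1 : (η - 1) * (l i:ℝ) ≥ (η - α) * (l i:ℝ) := by
        have : (0:ℝ) ≤ (l i:ℝ) := Nat.cast_nonneg _
        nlinarith
      linarith
    have hg3' : 3 ≤ g := by exact_mod_cast hg3
    -- m (i+1) = m i + g
    have hmadd : m (i+1) = m i + g := by
      simp only [hm, hgdef]
      have h1 := hmono1 i (by omega)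
      omega
    -- T (m i) ≤ (1/b)^(g-1)
    have hzero : ∀ j, j < g - 1 → (θ (m i + j + 1) : ℝ) / (b:ℝ)^(j+1) = 0 := by
      intro j hj
      have h0 : θ (m i + j + 1) = 0 := by
        apply hbetween i (m i + j + 1) hi2 (by omega)
        omega
      rw [h0]
      simp
    have hsplit2 : ∑ j ∈ Finset.range (g-1), (θ (m i + j + 1) : ℝ) / (b:ℝ)^(j+1)
        + ∑' j : ℕ, (θ (m i + (j + (g-1)) + 1) : ℝ) / (b:ℝ)^((j + (g-1))+1)
        = T (m i) :=
      Summable.sum_add_tsum_nat_add (g-1) (hsummable (m i))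
    have hzero_sum : ∑ j ∈ Finset.range (g-1),
        (θ (m i + j + 1) : ℝ) / (b:ℝ)^(j+1) = 0 :=
      Finset.sum_eq_zero (fun j hj => hzero j (Finset.mem_range.1 hj))
    have hTeq : T (m i) = ∑' j : ℕ,
        (θ (m i + (j + (g-1)) + 1) : ℝ) / (b:ℝ)^((j + (g-1))+1) := by
      rw [hzero_sum, zero_add] at hsplit2
      linarith [hsplit2]
    have hterm : ∀ j : ℕ, (θ (m i + (j + (g-1)) + 1) : ℝ) / (b:ℝ)^((j + (g-1))+1)
        ≤ (1/(b:ℝ))^(j+g) := by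
      intro j
      have h1 : (θ (m i + (j + (g-1)) + 1):ℝ) ≤ 1 := by
        exact_mod_cast hθle1 _ (by omega)
      have he : (j + (g-1)) + 1 = j + g := by omega
      rw [he]
      calc (θ (m i + (j + (g-1)) + 1):ℝ) / (b:ℝ)^(j+g) ≤ 1/(b:ℝ)^(j+g) := by gcongr
        _ = (1/(b:ℝ))^(j+g) := by rw [div_pow, one_pow]
    have hsum_lhs : Summable (fun j : ℕ =>
        (θ (m i + (j + (g-1)) + 1) : ℝ) / (b:ℝ)^((j + (g-1))+1)) :=
      (summable_nat_add_iff (g-1)).2 (hsummable (m i))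
    have hsum_rhs : Summable (fun j : ℕ => (1/(b:ℝ))^(j+g)) := by
      apply Summable.congr ((summable_geometric_of_lt_one hrb0 hrb1).mul_left ((1/(b:ℝ))^g))
      intro j
      rw [pow_add]
      ring
    have hgsum : ∑' j : ℕ, (1/(b:ℝ))^(j+g) = (1/(b:ℝ))^g * (1 - 1/(b:ℝ))⁻¹ := by
      have h1 : ∀ j : ℕ, (1/(b:ℝ))^(j+g) = (1/(b:ℝ))^g * (1/(b:ℝ))^j := by
        intro j
        rw [pow_add]
        ring
      rw [tsum_congr h1, tsum_mul_left, tsum_geometric_of_lt_one hrb0 hrb1]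
    have hpos : (0:ℝ) < 1 - 1/(b:ℝ) := by linarith
    have hhalf : (1:ℝ)/(b:ℝ) ≤ 1/2 := by
      rw [div_le_div_iff₀ hb0 (by norm_num)]
      linarith
    have hfin : (1/(b:ℝ))^g * (1 - 1/(b:ℝ))⁻¹ ≤ (1/(b:ℝ))^(g-1) := by
      have hx : (1/(b:ℝ)) * (1 - 1/(b:ℝ))⁻¹ ≤ 1 := by
        rw [← div_eq_mul_inv, div_le_one hpos]
        linarith
      obtain ⟨g', hg'⟩ : ∃ g', g = g' + 1 := ⟨g-1, by omega⟩
      have hgm : g - 1 = g' := by omega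
      rw [hgm, hg', pow_succ]
      calc (1/(b:ℝ))^g' * (1/(b:ℝ)) * (1 - 1/(b:ℝ))⁻¹
          = (1/(b:ℝ))^g' * ((1/(b:ℝ)) * (1 - 1/(b:ℝ))⁻¹) := by ring
        _ ≤ (1/(b:ℝ))^g' * 1 := mul_le_mul_of_nonneg_left hx (by positivity)
        _ = (1/(b:ℝ))^g' := mul_one _
    have hTspec : T (m i) ≤ (1/(b:ℝ))^(g-1) := by
      rw [hTeq]
      calc ∑' j : ℕ, (θ (m i + (j + (g-1)) + 1) : ℝ) / (b:ℝ)^((j + (g-1))+1)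
          ≤ ∑' j : ℕ, (1/(b:ℝ))^(j+g) := Summable.tsum_le_tsum hterm hsum_lhs hsum_rhs
        _ = (1/(b:ℝ))^g * (1 - 1/(b:ℝ))⁻¹ := hgsum
        _ ≤ (1/(b:ℝ))^(g-1) := hfin
    -- T (m i) < 1/2
    have hTsmall : T (m i) < 1/2 := by
      have h1 : (1/(b:ℝ))^(g-1) ≤ (1/(b:ℝ))^2 :=
        pow_le_pow_of_le_one hrb0 (le_of_lt hrb1) (by omega)
      have h2 : (1/(b:ℝ))^2 ≤ (1/2:ℝ)^2 := by
        apply pow_le_pow_left₀ hrb0 hhalf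
      have : ((1:ℝ)/2)^2 < 1/2 := by norm_num
      linarith
    -- nint (b^(m i) y) = T (m i)
    have hnint_eq : nint ((b:ℝ)^(m i) * y) = T (m i) := by
      rw [hnintT (m i), nint_of_lt_half _ (hTnonneg _) hTsmall]
    refine ⟨m i, hmiN, ?_⟩
    rw [hnint_eq]
    -- exponent comparison
    have hmiR : (m i : ℝ) ≤ (l i : ℝ) := by
      have : m i ≤ l i := by simp only [hm]; omega
      exact_mod_cast this
    have hg1R : ((g-1:ℕ):ℝ) = (g:ℝ) - 1 := by
      push_cast [Nat.cast_sub (by omega : 1 ≤ g)]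
      ring
    have hexp : (m i : ℝ) * (α - 1) ≤ ((g-1:ℕ):ℝ) := by
      rw [hg1R]
      have h1 : (m i : ℝ) * (α - 1) ≤ (l i : ℝ) * (α - 1) := by
        apply mul_le_mul_of_nonneg_right hmiR (by linarith)
      have h2 : (l i:ℝ) * (α-1) = (l i:ℝ)*(η-1) - (l i:ℝ)*(η-α) := by ring
      have h3 : (η-α) * (l i:ℝ) ≥ 4 := hli4
      nlinarith
    calc T (m i) ≤ (1/(b:ℝ))^(g-1) := hTspec
      _ = (b:ℝ)^(-(((g-1:ℕ)):ℝ)) := hpow_rpow (g-1)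
      _ ≤ (b:ℝ)^(-((m i):ℝ) * (α - 1)) := by
          apply (Real.rpow_le_rpow_left_iff hb1).2
          rw [neg_mul]
          linarith
  ----------------------------------------------------------------
  -- endgame
  ----------------------------------------------------------------
  have h1S : (1:ℝ) ∈ S := by
    refine ⟨le_rfl, Frequently.of_forall fun n => ?_⟩
    have he : -(n:ℝ) * ((1:ℝ) - 1) = 0 := by ring
    rw [he, Real.rpow_zero]
    exact le_trans (nint_le_half _) (by norm_num)
  have hbdd : BddAbove S := ⟨η, hub_S⟩
  have hDelta : Delta b y = sSup S := rfl
  rw [hDelta]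
  apply le_antisymm
  · exact csSup_le ⟨1, h1S⟩ hub_S
  · by_contra hlt
    push_neg at hlt
    have hd1 : (1:ℝ) ≤ sSup S := le_csSup hbdd h1S
    set α := (sSup S + η)/2 with hα
    have hα1 : 1 ≤ α := by rw [hα]; linarith
    have hαlt : α < η := by rw [hα]; linarith
    have hαS : α ∈ S := hmem α hα1 hαlt
    have := le_csSup hbdd hαS
    rw [hα] at this
    linarith
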